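/- Let r ≥ 1, let L ≥ 1 be an integer with Δ = 2^L, let d, k ∈ ℤ_{≥1}, ε, η ∈ (0,0.5), and let Q ⊆ [Δ]^d be finite. Let o > 0 satisfy o ≤ min_{Z⊆[Δ]^d, |Z|=k} cost^{(r)}(Q,Z). For i ∈ {−1,0,…,L} set g_i = Δ/2^i and T_i = 0.01·o/(√d·g_i)^r, and set γ = min( η/(8·2^r·kL), ε/(4000·2^{2r}·(k+d^{1.5r})·L) ). Suppose Q^N ⊆ Q is a union Q^N = ⋃_{i=0}^{L} ⋃_{P∈𝒫_i^N} P of pairwise disjoint parts such that: Σ_{i=0}^L |𝒫_i^N| ≤ 20000(k+d^{1.5r})L; every P ∈ 𝒫_i^N satisfies |P| ≤ 2γT_i; every P ∈ 𝒫_i^N is contained in an axis-aligned cube C_P of side length g_{i−1} = 2g_i, the cubes {C_P : P ∈ 𝒫_i^N} are pairwise disjoint for each fixed i, and every such cube satisfies |C_P ∩ Q| ≥ 0.5·T_{i−1} and |C_P ∩ (Q∖Q^N)| ≥ 0.25·T_{i−1}. Then for every t ≥ |Q|/k and every Z ⊆ [Δ]^d with |Z| = k: cost^{(r)}_t(Q∖Q^N,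 Z) ≤ cost^{(r)}_t(Q,Z) and cost^{(r)}_{(1+η)t}(Q,Z) ≤ (1+ε)·cost^{(r)}_t(Q∖Q^N, Z). -/

import Mathlib

open scoped ENNReal Classical

noncomputable section

/-- Points of `ℝ^d` with the Euclidean metric. -/
abbrev Pt (d : ℕ) := EuclideanSpace ℝ (Fin d)

/-- The grid `[Δ]^d = {1,…,Δ}^d`. -/
def gridSet (Δ d : ℕ) : Set (Pt d) :=
  {p | ∀ i : Fin d, ∃ m : ℕ, 1 ≤ m ∧ m ≤ Δ ∧ p i = m}

/-- The capacitated ℓ_r clustering cost `cost^{(r)}_t(Q, Z, w)` of the weighted point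
set `(Q, w)` for the set of centers `Z` with capacity `t`: the minimum of
`Σ_{p∈Q} w(p)·dist(p,π(p))^r` over all assignments `π : Q → Z` in which each center
receives total weight at most `t`, as a value in `ℝ≥0∞` (`⊤` when no feasible
assignment exists). -/
def ccost (r : ℝ) {d : ℕ} (Q : Finset (Pt d)) (w : Pt d → ℝ)
    (Z : Finset (Pt d)) (t : ℝ) : ℝ≥0∞ :=
  ⨅ π : {π : {p // p ∈ Q} → {z // z ∈ Z} //
      ∀ z0 : {z // z ∈ Z}, (∑ p ∈ Q.attach, if π p = z0 then w p.1 else 0) ≤ t},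
    ENNReal.ofReal (∑ p ∈ Q.attach, w p.1 * dist p.1 (π.1 p).1 ^ r)

end

noncomputable section

/-- The axis-aligned cube with corner `a` and side length `s`:
`∏_l [a_l, a_l + s)`. -/
def cube {d : ℕ} (a : Fin d → ℝ) (s : ℝ) : Set (Pt d) :=
  {x | ∀ l : Fin d, a l ≤ x l ∧ x l < a l + s}

end

/- ### Auxiliary lemmas -/

lemma real_add_rpow (r a b : ℝ) (hr : 1 ≤ r) (ha : 0 ≤ a) (hb : 0 ≤ b) :
    (a + b) ^ r ≤ 2 ^ (r - 1) * (a ^ r + b ^ r) := by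
  have key := NNReal.rpow_add_le_mul_rpow_add_rpow ⟨a, ha⟩ ⟨b, hb⟩ hr
  have := (NNReal.coe_le_coe).2 key
  push_cast at this
  convert this using 3 <;> rfl

lemma min_le_avg {α : Type*} (B : Finset α) (f : α → ℝ) (q : α)
    (hmin : ∀ x ∈ B, f q ≤ f x) : (B.card : ℝ) * f q ≤ ∑ x ∈ B, f x := by
  calc (B.card : ℝ) * f q = ∑ _x ∈ B, f q := by rw [Finset.sum_const, nsmul_eq_mul]
    _ ≤ ∑ x ∈ B, f x := Finset.sum_le_sum hmin

lemma cube_diam {d : ℕ} (a : Fin d → ℝ) (s : ℝ) (hs : 0 ≤ s) (p q : Pt d)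
    (hp : p ∈ cube a s) (hq : q ∈ cube a s) : dist p q ≤ Real.sqrt d * s := by
  rw [EuclideanSpace.dist_eq]
  have : ∑ l, dist (p l) (q l) ^ 2 ≤ ∑ _l : Fin d, s ^ 2 := by
    apply Finset.sum_le_sum
    intro l _
    have h1 := hp l; have h2 := hq l
    have : |p l - q l| ≤ s := by
      rw [abs_le]; constructor <;> [linarith [h1.1, h2.2]; linarith [h1.2, h2.1]]
    calc dist (p l) (q l) ^ 2 = |p l - q l| ^ 2 := by
          rw [Real.dist_eq]
      _ ≤ s ^ 2 := by nlinarith [abs_nonneg (p l - q l)]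
  calc Real.sqrt (∑ l, dist (p l) (q l) ^ 2) ≤ Real.sqrt (d * s ^ 2) := by
        apply Real.sqrt_le_sqrt; simpa using this
    _ = Real.sqrt d * s := by
        rw [Real.sqrt_mul (by positivity), Real.sqrt_sq hs]

lemma sum_attach_dite {α : Type*} [DecidableEq α] (s : Finset α) (G : ∀ p, p ∈ s → ℝ) :
    ∑ p ∈ s.attach, G p.1 p.2 = ∑ p ∈ s, if h : p ∈ s then G p h else 0 := by
  rw [← Finset.sum_attach s (fun p => if h : p ∈ s then G p h else 0)]
  exact Finset.sum_congr rfl (fun p _ => by rw [dif_pos p.2])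

lemma ccost_anti (r : ℝ) {d : ℕ} (Q' Q : Finset (Pt d)) (hsub : Q' ⊆ Q)
    (Z : Finset (Pt d)) (t : ℝ) :
    ccost r Q' (fun _ => 1) Z t ≤ ccost r Q (fun _ => 1) Z t := by
  apply le_iInf
  rintro ⟨π, hπ⟩
  have hfeas : ∀ z0 : {z // z ∈ Z},
      (∑ p ∈ Q'.attach, if π ⟨p.1, hsub p.2⟩ = z0 then (1:ℝ) else 0) ≤ t := by
    intro z0
    have e1 : (∑ p ∈ Q'.attach, if π ⟨p.1, hsub p.2⟩ = z0 then (1:ℝ) else 0)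
        = ∑ p ∈ Q', if h : p ∈ Q then (if π ⟨p, h⟩ = z0 then (1:ℝ) else 0) else 0 := by
      rw [sum_attach_dite Q' (fun p hp => if π ⟨p, hsub hp⟩ = z0 then (1:ℝ) else 0)]
      exact Finset.sum_congr rfl (fun p hp => by rw [dif_pos hp, dif_pos (hsub hp)])
    have e2 : (∑ p ∈ Q.attach, if π p = z0 then (1:ℝ) else 0)
        = ∑ p ∈ Q, if h : p ∈ Q then (if π ⟨p, h⟩ = z0 then (1:ℝ) else 0) else 0 := by
      rw [sum_attach_dite Q (fun p hp => if π ⟨p, hp⟩ = z0 then (1:ℝ) else 0)]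
    calc (∑ p ∈ Q'.attach, if π ⟨p.1, hsub p.2⟩ = z0 then (1:ℝ) else 0)
        = ∑ p ∈ Q', if h : p ∈ Q then (if π ⟨p, h⟩ = z0 then (1:ℝ) else 0) else 0 := e1
      _ ≤ ∑ p ∈ Q, if h : p ∈ Q then (if π ⟨p, h⟩ = z0 then (1:ℝ) else 0) else 0 :=
          Finset.sum_le_sum_of_subset_of_nonneg hsub (by intro p _ _; split_ifs <;> norm_num)
      _ ≤ t := by rw [← e2]; exact hπ z0
  refine le_trans (iInf_le _ ⟨fun p => π ⟨p.1, hsub p.2⟩, hfeas⟩) ?_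
  apply ENNReal.ofReal_le_ofReal
  simp only [one_mul]
  rw [sum_attach_dite Q' (fun p hp => dist p (π ⟨p, hsub hp⟩).1 ^ r),
    sum_attach_dite Q (fun p hp => dist p (π ⟨p, hp⟩).1 ^ r)]
  calc (∑ p ∈ Q', if h : p ∈ Q' then dist p (π ⟨p, hsub h⟩).1 ^ r else 0)
      = ∑ p ∈ Q', if h : p ∈ Q then dist p (π ⟨p, h⟩).1 ^ r else 0 := by
        apply Finset.sum_congr rfl; intro p hp
        rw [dif_pos hp, dif_pos (hsub hp)]
    _ ≤ ∑ p ∈ Q, if h : p ∈ Q then dist p (π ⟨p, h⟩).1 ^ r else 0 := by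
        apply Finset.sum_le_sum_of_subset_of_nonneg hsub
        intro p hp _; rw [dif_pos hp]; positivity

set_option maxHeartbeats 2000000 in
/-- **Lemma 3.4 (Removal of small parts does not change the capacitated cost by
much).** Let `o` be a lower bound on the optimal (uncapacitated) ℓ_r `k`-clustering
cost, `T_i = 0.01·o/(√d·g_i)^r` with `g_i = Δ/2^i`, and
`γ = min(η/(8·2^r kL), ε/(4000·2^{2r}(k+d^{1.5r})L))`. Let `Q^N ⊆ Q` be a union of
pairwise disjoint parts `Ps_0,…,Ps_L`, at most `20000(k+d^{1.5r})L` in total, each part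
of level `i` having at most `2γT_i` points and lying in a cube of side `2g_i`
(cubes of the same level pairwise disjoint) that contains at least `0.5·T_{i−1}`
points of `Q` and at least `0.25·T_{i−1}` points of `Q∖Q^N`. Then for every
`t ≥ |Q|/k` and every `Z ⊆ [Δ]^d` with `|Z| = k`,
`cost^{(r)}_t(Q∖Q^N,Z) ≤ cost^{(r)}_t(Q,Z)` and
`cost^{(r)}_{(1+η)t}(Q,Z) ≤ (1+ε)·cost^{(r)}_t(Q∖Q^N,Z)`. -/
theorem stmt14 (r : ℝ) (hr : 1 ≤ r) (L Δ d k : ℕ) (hL : 1 ≤ L) (hΔ : Δ = 2 ^ L)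
    (hd : 1 ≤ d) (hk : 1 ≤ k)
    (ε η : ℝ) (hε : ε ∈ Set.Ioo (0:ℝ) 0.5) (hη : η ∈ Set.Ioo (0:ℝ) 0.5)
    (Q : Finset (Pt d)) (hQ : ↑Q ⊆ gridSet Δ d)
    (o : ℝ) (ho : 0 < o)
    (hoOPT : ∀ Z : Finset (Pt d), ↑Z ⊆ gridSet Δ d → Z.card = k →
        o ≤ ∑ p ∈ Q, Metric.infDist p (↑Z : Set (Pt d)) ^ r)
    (γ : ℝ) (hγ : γ = min (η / (8 * (2:ℝ) ^ r * k * L))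
        (ε / (4000 * (2:ℝ) ^ (2 * r) * ((k:ℝ) + (d:ℝ) ^ (1.5 * r)) * L)))
    (Ps : Fin (L + 1) → Finset (Finset (Pt d)))
    (QN : Finset (Pt d)) (hQNQ : QN ⊆ Q)
    (hQN : (↑QN : Set (Pt d)) = ⋃ i : Fin (L + 1), ⋃ P ∈ Ps i, (↑P : Set (Pt d)))
    (hpdisj : ∀ i j : Fin (L + 1), ∀ P ∈ Ps i, ∀ P' ∈ Ps j,
        (i ≠ j ∨ P ≠ P') → Disjoint P P')
    (hnum : (∑ i : Fin (L + 1), ((Ps i).card : ℝ)) ≤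
        20000 * ((k:ℝ) + (d:ℝ) ^ (1.5 * r)) * L)
    (hsmall : ∀ i : Fin (L + 1), ∀ P ∈ Ps i,
        (P.card : ℝ) ≤ 2 * γ * (0.01 * o / (Real.sqrt d * ((Δ:ℝ) / 2 ^ (i:ℕ))) ^ r))
    (A : Fin (L + 1) → Finset (Pt d) → (Fin d → ℝ))
    (hcube : ∀ i : Fin (L + 1), ∀ P ∈ Ps i,
        (↑P : Set (Pt d)) ⊆ cube (A i P) (2 * ((Δ:ℝ) / 2 ^ (i:ℕ))))
    (hcubedisj : ∀ i : Fin (L + 1), ∀ P ∈ Ps i, ∀ P' ∈ Ps i, P ≠ P' →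
        Disjoint (cube (A i P) (2 * ((Δ:ℝ) / 2 ^ (i:ℕ))))
          (cube (A i P') (2 * ((Δ:ℝ) / 2 ^ (i:ℕ)))))
    (hfull : ∀ i : Fin (L + 1), ∀ P ∈ Ps i,
        0.5 * (0.01 * o / (Real.sqrt d * (2 * (Δ:ℝ) / 2 ^ (i:ℕ))) ^ r) ≤
          ((Q.filter fun p => p ∈ cube (A i P) (2 * ((Δ:ℝ) / 2 ^ (i:ℕ)))).card : ℝ))
    (hfull' : ∀ i : Fin (L + 1), ∀ P ∈ Ps i,
        0.25 * (0.01 * o / (Real.sqrt d * (2 * (Δ:ℝ) / 2 ^ (i:ℕ))) ^ r) ≤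
          (((Q \ QN).filter fun p =>
              p ∈ cube (A i P) (2 * ((Δ:ℝ) / 2 ^ (i:ℕ)))).card : ℝ)) :
    ∀ t : ℝ, (Q.card : ℝ) / k ≤ t →
      ∀ Z : Finset (Pt d), ↑Z ⊆ gridSet Δ d → Z.card = k →
        ccost r (Q \ QN) (fun _ => 1) Z t ≤ ccost r Q (fun _ => 1) Z t ∧
        ccost r Q (fun _ => 1) Z ((1 + η) * t) ≤
          ENNReal.ofReal (1 + ε) * ccost r (Q \ QN) (fun _ => 1) Z t := by
  -- basic numeric facts
  obtain ⟨hε0, hε5⟩ := hε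
  obtain ⟨hη0, hη5⟩ := hη
  have hr0 : (0:ℝ) ≤ r := le_trans zero_le_one hr
  have hL1 : (1:ℝ) ≤ L := by exact_mod_cast hL
  have hk1 : (1:ℝ) ≤ k := by exact_mod_cast hk
  have hd1 : (1:ℝ) ≤ d := by exact_mod_cast hd
  set X : ℝ := (2:ℝ) ^ r with hXdef
  have hX0 : 0 < X := Real.rpow_pos_of_pos two_pos r
  have hX2 : 2 ≤ X := by
    have := Real.rpow_le_rpow_of_exponent_le (one_le_two) hr
    rwa [Real.rpow_one] at this
  set K : ℝ := (k:ℝ) + (d:ℝ) ^ (1.5 * r) with hKdef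
  have hdr1 : (1:ℝ) ≤ (d:ℝ) ^ (1.5 * r) := by
    calc (1:ℝ) = 1 ^ (1.5 * r) := (Real.one_rpow _).symm
      _ ≤ (d:ℝ) ^ (1.5 * r) := Real.rpow_le_rpow zero_le_one hd1 (by linarith)
  have hK2 : 2 ≤ K := by rw [hKdef]; linarith
  have hsd1 : 1 ≤ Real.sqrt d := by
    rw [show (1:ℝ) = Real.sqrt 1 by simp]
    exact Real.sqrt_le_sqrt hd1
  have hsd0 : 0 < Real.sqrt d := by linarith
  have h2r2 : (2:ℝ) ^ (2 * r) = X ^ 2 := by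
    rw [two_mul, Real.rpow_add two_pos, hXdef, sq]
  have hγ2 : 4000 * X ^ 2 * K * L * γ ≤ ε := by
    have hpos : (0:ℝ) < 4000 * X ^ 2 * K * L := by positivity
    have : γ ≤ ε / (4000 * X ^ 2 * K * L) := by
      rw [hγ, ← h2r2]; exact min_le_right _ _
    calc 4000 * X ^ 2 * K * L * γ ≤ 4000 * X ^ 2 * K * L * (ε / (4000 * X ^ 2 * K * L)) :=
          mul_le_mul_of_nonneg_left this hpos.le
      _ = ε := by field_simp
  have hγ1 : 8 * X * k * L * γ ≤ η := by
    have hpos : (0:ℝ) < 8 * X * (k:ℝ) * L := by positivity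
    have : γ ≤ η / (8 * X * k * L) := by rw [hγ]; exact min_le_left _ _
    calc 8 * X * (k:ℝ) * L * γ ≤ 8 * X * k * L * (η / (8 * X * k * L)) :=
          mul_le_mul_of_nonneg_left this hpos.le
      _ = η := by field_simp
  have hγ0 : 0 < γ := by
    rw [hγ]; apply lt_min <;> · apply div_pos (by linarith) (by rw [← h2r2] at *; positivity)
  have hXne : X ≠ 0 := ne_of_gt hX0
  clear_value X K
  -- the levels
  set T : Fin (L+1) → ℝ := fun i => 0.01 * o / (Real.sqrt d * ((Δ:ℝ) / 2 ^ (i:ℕ))) ^ r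
    with hTdef
  have hΔ0 : (0:ℝ) < (Δ:ℝ) := by
    rw [hΔ]; positivity
  have hgg0 : ∀ i : Fin (L+1), (0:ℝ) < (Δ:ℝ) / 2 ^ (i:ℕ) := fun i => by positivity
  have hbase0 : ∀ i : Fin (L+1), (0:ℝ) < (Real.sqrt d * ((Δ:ℝ) / 2 ^ (i:ℕ))) ^ r :=
    fun i => Real.rpow_pos_of_pos (by positivity) r
  have hT0 : ∀ i, 0 < T i := fun i => div_pos (by linarith) (hbase0 i)
  have hTmul : ∀ i, T i * (Real.sqrt d * ((Δ:ℝ) / 2 ^ (i:ℕ))) ^ r = 0.01 * o := by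
    intro i; rw [hTdef]; field_simp
  have hTm : ∀ i : Fin (L+1),
      0.01 * o / (Real.sqrt d * (2 * (Δ:ℝ) / 2 ^ (i:ℕ))) ^ r = T i / X := by
    intro i
    have h1 : Real.sqrt d * (2 * (Δ:ℝ) / 2 ^ (i:ℕ))
        = 2 * (Real.sqrt d * ((Δ:ℝ) / 2 ^ (i:ℕ))) := by ring
    rw [h1, Real.mul_rpow (by norm_num) (by positivity), ← hXdef, hTdef]
    field_simp
  have hsmall' : ∀ i : Fin (L + 1), ∀ P ∈ Ps i, (P.card : ℝ) ≤ 2 * γ * T i := hsmall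
  clear_value T
  intro t ht Z hZ hZk
  have ht0 : 0 ≤ t := le_trans (by positivity) ht
  have hQk : (Q.card : ℝ) ≤ k * t := by
    rw [div_le_iff₀ (by positivity : (0:ℝ) < (k:ℝ))] at ht
    linarith [ht]
  constructor
  · exact ccost_anti r (Q \ QN) Q (Finset.sdiff_subset) Z t
  -- === Part 2 ===
  · have h10 : ENNReal.ofReal (1 + ε) ≠ 0 := by
      simp only [ne_eq, ENNReal.ofReal_eq_zero, not_le]; linarith
    unfold ccost
    rw [ENNReal.mul_iInf_of_ne h10 ENNReal.ofReal_ne_top]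
    apply le_iInf
    rintro ⟨π, hπ⟩
    -- the cost function of the assignment π on Q \ QN
    set c : Pt d → ℝ := fun q => if h : q ∈ Q \ QN then dist q (π ⟨q, h⟩).1 ^ r else 0
      with hcdef
    have hc0 : ∀ q, 0 ≤ c q := by
      intro q; rw [hcdef]; dsimp only; split
      · exact Real.rpow_nonneg dist_nonneg r
      · exact le_refl 0
    set C : ℝ := ∑ q ∈ Q \ QN, c q with hCdef
    have hC0 : 0 ≤ C := Finset.sum_nonneg fun q _ => hc0 q
    have hCπ : (∑ p ∈ (Q \ QN).attach, (fun _ => (1:ℝ)) p.1 * dist p.1 (π p).1 ^ r) = C := by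
      simp only [one_mul]
      rw [sum_attach_dite (Q \ QN) (fun p hp => dist p (π ⟨p, hp⟩).1 ^ r)]
    -- the candidate sets in the cubes
    set B : Fin (L+1) → Finset (Pt d) → Finset (Pt d) :=
      fun i P => (Q \ QN).filter (fun p => p ∈ cube (A i P) (2 * ((Δ:ℝ) / 2 ^ (i:ℕ))))
      with hBdef
    have hBcard : ∀ i P, P ∈ Ps i → 0.25 * (T i / X) ≤ ((B i P).card : ℝ) := by
      intro i P hP
      have := hfull' i P hP
      rwa [hTm i] at this
    have hBne : ∀ i P, P ∈ Ps i → (B i P).Nonempty := by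
      intro i P hP
      rw [← Finset.card_pos]
      have h2 := hBcard i P hP
      have h3 : (0:ℝ) < 0.25 * (T i / X) :=
        mul_pos (by norm_num) (div_pos (hT0 i) hX0)
      exact_mod_cast lt_of_lt_of_le h3 h2
    have hminEx : ∀ i P, P ∈ Ps i → ∃ q ∈ B i P, ∀ b ∈ B i P, c q ≤ c b :=
      fun i P hP => Finset.exists_min_image (B i P) c (hBne i P hP)
    choose qm hqmB hqmmin using hminEx
    have hqmQN : ∀ i P (hP : P ∈ Ps i), qm i P hP ∈ Q \ QN := by
      intro i P hP
      have h' := hqmB i P hP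
      simp only [hBdef, Finset.mem_filter] at h'
      exact h'.1
    have hqmcube : ∀ i P (hP : P ∈ Ps i),
        qm i P hP ∈ cube (A i P) (2 * ((Δ:ℝ) / 2 ^ (i:ℕ))) := by
      intro i P hP
      have h' := hqmB i P hP
      simp only [hBdef, Finset.mem_filter] at h'
      exact h'.2
    -- each point of QN belongs to a part
    have hmemiff : ∀ p : Pt d, p ∈ QN ↔ ∃ i, ∃ P, P ∈ Ps i ∧ p ∈ P := by
      intro p
      rw [← Finset.mem_coe, hQN]
      simp
    choose fI fP hfP hfmem using fun p (hp : p ∈ QN) => (hmemiff p).1 hp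
    -- the extended assignment
    set π' : {p // p ∈ Q} → {z // z ∈ Z} := fun p =>
      if h : p.1 ∈ QN then
        π ⟨qm (fI p.1 h) (fP p.1 h) (hfP p.1 h), hqmQN (fI p.1 h) (fP p.1 h) (hfP p.1 h)⟩
      else π ⟨p.1, Finset.mem_sdiff.2 ⟨p.2, h⟩⟩
      with hπ'def
    set D : Pt d → ℝ := fun p => if h : p ∈ Q then dist p (π' ⟨p, h⟩).1 ^ r else 0 with hDdef
    have hD0 : ∀ p, 0 ≤ D p := by
      intro p; rw [hDdef]; dsimp only; split
      · exact Real.rpow_nonneg dist_nonneg r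
      · exact le_refl 0
    set E : ℝ := ∑ p ∈ QN, D p with hEdef
    have hE0 : 0 ≤ E := Finset.sum_nonneg fun p _ => hD0 p
    have hDc : ∀ p ∈ Q \ QN, D p = c p := by
      intro p hp
      have h1 : p ∈ Q := (Finset.mem_sdiff.1 hp).1
      have h2 : p ∉ QN := (Finset.mem_sdiff.1 hp).2
      simp only [hDdef, hcdef]
      rw [dif_pos h1, dif_pos hp]
      simp only [hπ'def]
      rw [dif_neg h2]
    have hDQ : ∑ p ∈ Q, D p = C + E := by
      rw [← Finset.sum_sdiff hQNQ, hEdef, hCdef]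
      congr 1
      exact Finset.sum_congr rfl hDc
    have hcost : (∑ p ∈ Q.attach, (fun _ => (1:ℝ)) p.1 * dist p.1 (π' p).1 ^ r) = C + E := by
      simp only [one_mul]
      rw [sum_attach_dite Q (fun p hp => dist p (π' ⟨p, hp⟩).1 ^ r), ← hDQ]
    clear_value c C B D E π'
    -- key per-part bound
    have hkey : ∀ i (P : Finset (Pt d)) (hP : P ∈ Ps i),
        ∑ p ∈ P, D p ≤ 0.01 * γ * X^2 * o + 4 * γ * X^2 * ∑ q ∈ B i P, c q := by
      intro i P hP
      have hq0QN : qm i P hP ∈ Q \ QN := hqmQN i P hP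
      have hcq0 : c (qm i P hP) = dist (qm i P hP) (π ⟨qm i P hP, hq0QN⟩).1 ^ r := by
        simp only [hcdef]
        rw [dif_pos hq0QN]
      have hside : (0:ℝ) ≤ 2 * ((Δ:ℝ)/2^(i:ℕ)) := by positivity
      have hpt : ∀ p ∈ P, D p ≤
          (X/2) * ((Real.sqrt d * (2 * ((Δ:ℝ)/2^(i:ℕ))))^r + c (qm i P hP)) := by
        intro p hp
        have hpQN : p ∈ QN := (hmemiff p).2 ⟨i, P, hP, hp⟩
        have hpQ : p ∈ Q := hQNQ hpQN
        have hqe : qm (fI p hpQN) (fP p hpQN) (hfP p hpQN) = qm i P hP := by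
          have hd' : ¬(fI p hpQN ≠ i ∨ fP p hpQN ≠ P) := by
            intro hor
            exact (Finset.disjoint_left.1
              (hpdisj _ _ _ (hfP p hpQN) _ hP hor)) (hfmem p hpQN) hp
          push_neg at hd'
          obtain ⟨h1, h2⟩ := hd'
          subst h1; subst h2
          rfl
        have hDp : D p = dist p (π ⟨qm i P hP, hq0QN⟩).1 ^ r := by
          simp only [hDdef]
          rw [dif_pos hpQ]
          simp only [hπ'def]
          rw [dif_pos hpQN]
          exact congrArg (fun z => dist p (π z).1 ^ r) (Subtype.ext hqe)
        have hdpq : dist p (qm i P hP) ≤ Real.sqrt d * (2 * ((Δ:ℝ)/2^(i:ℕ))) :=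
          cube_diam _ _ hside p (qm i P hP) (hcube i P hP (Finset.mem_coe.2 hp))
            (hqmcube i P hP)
        have h2r1 : (2:ℝ)^(r-1) = X/2 := by
          rw [Real.rpow_sub two_pos, Real.rpow_one, hXdef]
        rw [hDp]
        calc dist p (π ⟨qm i P hP, hq0QN⟩).1 ^ r
            ≤ (dist p (qm i P hP) + dist (qm i P hP) (π ⟨qm i P hP, hq0QN⟩).1) ^ r :=
              Real.rpow_le_rpow dist_nonneg (dist_triangle _ _ _) hr0
          _ ≤ 2^(r-1) * (dist p (qm i P hP) ^ r
              + dist (qm i P hP) (π ⟨qm i P hP, hq0QN⟩).1 ^ r) :=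
              real_add_rpow r _ _ hr dist_nonneg dist_nonneg
          _ ≤ (X/2) * ((Real.sqrt d * (2 * ((Δ:ℝ)/2^(i:ℕ))))^r + c (qm i P hP)) := by
              rw [h2r1, hcq0]
              apply mul_le_mul_of_nonneg_left _ (by positivity)
              apply add_le_add_left
              exact Real.rpow_le_rpow dist_nonneg hdpq hr0
      have hsum : ∑ p ∈ P, D p ≤ (P.card : ℝ) *
          ((X/2) * ((Real.sqrt d * (2 * ((Δ:ℝ)/2^(i:ℕ))))^r + c (qm i P hP))) := by
        calc ∑ p ∈ P, D p
            ≤ ∑ _p ∈ P, (X/2) * ((Real.sqrt d * (2 * ((Δ:ℝ)/2^(i:ℕ))))^r + c (qm i P hP)) :=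
              Finset.sum_le_sum hpt
          _ = _ := by rw [Finset.sum_const, nsmul_eq_mul]
      have hPcard : (P.card : ℝ) ≤ 2 * γ * T i := hsmall' i P hP
      have hA1 : (Real.sqrt d * (2 * ((Δ:ℝ)/2^(i:ℕ))))^r
          = X * (Real.sqrt d * ((Δ:ℝ)/2^(i:ℕ)))^r := by
        rw [show Real.sqrt d * (2 * ((Δ:ℝ)/2^(i:ℕ)))
            = 2 * (Real.sqrt d * ((Δ:ℝ)/2^(i:ℕ))) by ring,
          Real.mul_rpow (by norm_num) (by positivity), hXdef]
      have e1 : (P.card:ℝ) * ((Real.sqrt d * (2 * ((Δ:ℝ)/2^(i:ℕ))))^r)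
          ≤ 2 * γ * X * (0.01 * o) := by
        rw [hA1]
        calc (P.card:ℝ) * (X * (Real.sqrt d * ((Δ:ℝ)/2^(i:ℕ)))^r)
            ≤ (2*γ*T i) * (X * (Real.sqrt d * ((Δ:ℝ)/2^(i:ℕ)))^r) := by
              apply mul_le_mul_of_nonneg_right hPcard
              exact mul_nonneg hX0.le (hbase0 i).le
          _ = 2*γ*X*(T i * (Real.sqrt d * ((Δ:ℝ)/2^(i:ℕ)))^r) := by ring
          _ = 2*γ*X*(0.01*o) := by rw [hTmul i]
      have e2 : (P.card:ℝ) * c (qm i P hP) ≤ 8 * γ * X * ∑ q ∈ B i P, c q := by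
        have hm : ((B i P).card : ℝ) * c (qm i P hP) ≤ ∑ q ∈ B i P, c q :=
          min_le_avg _ c (qm i P hP) (hqmmin i P hP)
        have hc0' := hc0 (qm i P hP)
        have hBc := hBcard i P hP
        have h8 : (0:ℝ) ≤ 8*γ*X := mul_nonneg (mul_nonneg (by norm_num) hγ0.le) hX0.le
        calc (P.card:ℝ) * c (qm i P hP) ≤ (2*γ*T i) * c (qm i P hP) :=
              mul_le_mul_of_nonneg_right hPcard hc0'
          _ = 8*γ*X*(0.25*(T i/X)*c (qm i P hP)) := by field_simp; ring
          _ ≤ 8*γ*X*(((B i P).card:ℝ) * c (qm i P hP)) := by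
              apply mul_le_mul_of_nonneg_left _ h8
              exact mul_le_mul_of_nonneg_right hBc hc0'
          _ ≤ 8*γ*X*∑ q ∈ B i P, c q := mul_le_mul_of_nonneg_left hm h8
      calc ∑ p ∈ P, D p
          ≤ (P.card : ℝ) * ((X/2) * ((Real.sqrt d * (2 * ((Δ:ℝ)/2^(i:ℕ))))^r
            + c (qm i P hP))) := hsum
        _ = (X/2) * ((P.card:ℝ) * ((Real.sqrt d * (2 * ((Δ:ℝ)/2^(i:ℕ))))^r)
            + (P.card:ℝ) * c (qm i P hP)) := by ring
        _ ≤ (X/2) * (2*γ*X*(0.01*o) + 8*γ*X*∑ q ∈ B i P, c q) :=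
            mul_le_mul_of_nonneg_left (add_le_add e1 e2) (by positivity)
        _ = 0.01 * γ * X^2 * o + 4 * γ * X^2 * ∑ q ∈ B i P, c q := by ring
    -- summing the candidate-set costs over one level
    have hlevel : ∀ i, ∑ P ∈ Ps i, (∑ q ∈ B i P, c q) ≤ C := by
      intro i
      have hdisjB : (↑(Ps i) : Set (Finset (Pt d))).PairwiseDisjoint (B i) := by
        intro P hP P' hP' hne
        apply Finset.disjoint_left.2
        intro q hq hq'
        simp only [hBdef, Finset.mem_filter] at hq hq'
        exact Set.disjoint_left.1
          (hcubedisj i P (Finset.mem_coe.1 hP) P' (Finset.mem_coe.1 hP') hne) hq.2 hq'.2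
      rw [hCdef, ← Finset.sum_biUnion hdisjB]
      apply Finset.sum_le_sum_of_subset_of_nonneg
      · intro q hq
        rw [Finset.mem_biUnion] at hq
        obtain ⟨P, hP, hqP⟩ := hq
        simp only [hBdef, Finset.mem_filter] at hqP
        exact hqP.1
      · intro q _ _; exact hc0 q
    -- decomposition of QN
    have houter : (↑(Finset.univ : Finset (Fin (L+1))) : Set (Fin (L+1))).PairwiseDisjoint
        (fun i => (Ps i).biUnion id) := by
      intro i _ j _ hij
      simp only [Finset.disjoint_biUnion_left, Finset.disjoint_biUnion_right, id]
      intro P hP P' hP'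
      exact (hpdisj _ _ P hP P' hP'
        (Or.inl (by intro h; first | exact hij h | exact hij h.symm))).symm
    have hinner : ∀ i, (↑(Ps i) : Set (Finset (Pt d))).PairwiseDisjoint id :=
      fun i P hP P' hP' hne =>
        hpdisj i i P (Finset.mem_coe.1 hP) P' (Finset.mem_coe.1 hP') (Or.inr hne)
    have hQNeq : QN = Finset.univ.biUnion (fun i => (Ps i).biUnion id) := by
      ext p
      rw [← Finset.mem_coe, hQN]
      simp
    have hEsplit : E = ∑ i : Fin (L+1), ∑ P ∈ Ps i, ∑ p ∈ P, D p := by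
      rw [hEdef, hQNeq, Finset.sum_biUnion houter]
      apply Finset.sum_congr rfl
      intro i _
      rw [Finset.sum_biUnion (hinner i)]
      rfl
    have h001 : (0:ℝ) ≤ 0.01*γ*X^2*o :=
      mul_nonneg (mul_nonneg (mul_nonneg (by norm_num) hγ0.le) (sq_nonneg X)) ho.le
    have h4g : (0:ℝ) ≤ 4*γ*X^2 :=
      mul_nonneg (mul_nonneg (by norm_num) hγ0.le) (sq_nonneg X)
    have hEbd : E ≤ 200 * γ * X^2 * K * L * o + 4 * γ * X^2 * ((L:ℝ)+1) * C := by
      rw [hEsplit]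
      calc ∑ i : Fin (L+1), ∑ P ∈ Ps i, ∑ p ∈ P, D p
          ≤ ∑ i : Fin (L+1), (((Ps i).card:ℝ) * (0.01*γ*X^2*o) + 4*γ*X^2*C) := by
            apply Finset.sum_le_sum
            intro i _
            calc ∑ P ∈ Ps i, ∑ p ∈ P, D p
                ≤ ∑ P ∈ Ps i, (0.01*γ*X^2*o + 4*γ*X^2*∑ q ∈ B i P, c q) :=
                  Finset.sum_le_sum (fun P hP => hkey i P hP)
              _ = ((Ps i).card:ℝ)*(0.01*γ*X^2*o)
                  + 4*γ*X^2*∑ P ∈ Ps i, ∑ q ∈ B i P, c q := by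
                  rw [Finset.sum_add_distrib, Finset.sum_const, nsmul_eq_mul,
                    ← Finset.mul_sum]
              _ ≤ ((Ps i).card:ℝ)*(0.01*γ*X^2*o) + 4*γ*X^2*C := by
                  have h' := mul_le_mul_of_nonneg_left (hlevel i) h4g
                  linarith only [h']
        _ = (∑ i : Fin (L+1), ((Ps i).card:ℝ)) * (0.01*γ*X^2*o)
            + ((L:ℝ)+1)*(4*γ*X^2*C) := by
            rw [Finset.sum_add_distrib, ← Finset.sum_mul, Finset.sum_const,
              Finset.card_univ, Fintype.card_fin, nsmul_eq_mul]
            push_cast; ring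
        _ ≤ (20000*K*L) * (0.01*γ*X^2*o) + ((L:ℝ)+1)*(4*γ*X^2*C) := by
            have h' := mul_le_mul_of_nonneg_right hnum h001
            linarith only [h']
        _ = 200 * γ * X^2 * K * L * o + 4 * γ * X^2 * ((L:ℝ)+1) * C := by ring
    -- lower bound on o
    have hoCE : o ≤ C + E := by
      have h1 := hoOPT Z hZ hZk
      have h2 : ∑ p ∈ Q, Metric.infDist p (↑Z : Set (Pt d)) ^ r ≤ ∑ p ∈ Q, D p := by
        apply Finset.sum_le_sum
        intro p hp
        have hmem : ((π' ⟨p, hp⟩ : {z // z ∈ Z}).1) ∈ (↑Z : Set (Pt d)) := by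
          exact_mod_cast (π' ⟨p, hp⟩).2
        have hle := Metric.infDist_le_dist_of_mem (x := p) hmem
        have hD : D p = dist p (π' ⟨p, hp⟩).1 ^ r := by
          simp only [hDdef]; rw [dif_pos hp]
        rw [hD]
        exact Real.rpow_le_rpow Metric.infDist_nonneg hle hr0
      linarith only [hDQ, h1, h2]
    -- E ≤ ε C
    have hEe : E ≤ ε * C := by
      have t1 : 200*γ*X^2*K*L*o ≤ ε*o/20 := by
        have h' := mul_le_mul_of_nonneg_right hγ2 ho.le
        linarith only [h']
      have hgXL : (0:ℝ) ≤ γ*X^2*(L:ℝ) :=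
        mul_nonneg (mul_nonneg hγ0.le (sq_nonneg X)) (by positivity)
      have t2 : 4*γ*X^2*((L:ℝ)+1)*C ≤ ε*C/1000 := by
        have h9 : 8*γ*X^2*(L:ℝ) ≤ ε/1000 := by
          have hKm : (0:ℝ) ≤ (K - 2) * (γ*X^2*(L:ℝ)) :=
            mul_nonneg (by linarith only [hK2]) hgXL
          linarith only [hγ2, hKm]
        have h8 : 4*γ*X^2*((L:ℝ)+1) ≤ 8*γ*X^2*(L:ℝ) := by
          have h' : (0:ℝ) ≤ γ*X^2*((L:ℝ)-1) :=
            mul_nonneg (mul_nonneg hγ0.le (sq_nonneg X)) (by linarith only [hL1])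
          linarith only [h']
        have h10' := mul_le_mul_of_nonneg_right (le_trans h8 h9) hC0
        linarith only [h10']
      have hmul1 : ε*o ≤ ε*(C+E) := mul_le_mul_of_nonneg_left hoCE hε0.le
      have hmul2 : ε*E ≤ 0.5*E := mul_le_mul_of_nonneg_right hε5.le hE0
      have hmul3 : (0:ℝ) ≤ ε*C := mul_nonneg hε0.le hC0
      linarith only [hEbd, t1, t2, hmul1, hmul2, hmul3]
    -- capacity bound
    have hQNcard : (QN.card : ℝ) ≤ η * t := by
      have hsplit1 : (QN.card:ℝ) = ∑ i : Fin (L+1), ∑ P ∈ Ps i, (P.card:ℝ) := by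
        have h0 : (QN.card:ℝ) = ∑ p ∈ QN, (1:ℝ) := by simp
        rw [h0, hQNeq, Finset.sum_biUnion houter]
        apply Finset.sum_congr rfl
        intro i _
        rw [Finset.sum_biUnion (hinner i)]
        apply Finset.sum_congr rfl
        intro P _
        simp
      have hcnt : ∀ i : Fin (L+1), ((Ps i).card : ℝ) * (0.5 * (T i / X)) ≤ (Q.card:ℝ) := by
        intro i
        have hdisjF : ∀ P ∈ Ps i, ∀ P' ∈ Ps i, P ≠ P' →
            Disjoint (Q.filter (fun p => p ∈ cube (A i P) (2 * ((Δ:ℝ)/2^(i:ℕ)))))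
              (Q.filter (fun p => p ∈ cube (A i P') (2 * ((Δ:ℝ)/2^(i:ℕ))))) := by
          intro P hP P' hP' hne
          apply Finset.disjoint_left.2
          intro q hq hq'
          simp only [Finset.mem_filter] at hq hq'
          exact Set.disjoint_left.1 (hcubedisj i P hP P' hP' hne) hq.2 hq'.2
        calc ((Ps i).card : ℝ) * (0.5 * (T i / X))
            = ∑ _P ∈ Ps i, 0.5*(T i/X) := by rw [Finset.sum_const, nsmul_eq_mul]
          _ ≤ ∑ P ∈ Ps i,
              ((Q.filter (fun p => p ∈ cube (A i P) (2 * ((Δ:ℝ)/2^(i:ℕ))))).card : ℝ) := by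
              apply Finset.sum_le_sum; intro P hP
              have := hfull i P hP; rwa [hTm i] at this
          _ = (((Ps i).biUnion
              (fun P => Q.filter (fun p => p ∈ cube (A i P) (2 * ((Δ:ℝ)/2^(i:ℕ)))))).card : ℝ) := by
              rw [Finset.card_biUnion hdisjF]
              push_cast; rfl
          _ ≤ (Q.card:ℝ) := by
              have : ((Ps i).biUnion
                  (fun P => Q.filter (fun p => p ∈ cube (A i P) (2 * ((Δ:ℝ)/2^(i:ℕ)))))) ⊆ Q := by
                intro q hq
                rw [Finset.mem_biUnion] at hq
                obtain ⟨P, hP, hqP⟩ := hq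
                exact (Finset.mem_filter.1 hqP).1
              exact_mod_cast Finset.card_le_card this
      have hper : ∀ i : Fin (L+1), ((Ps i).card:ℝ) * (2*γ*T i) ≤ 4*γ*X*(Q.card:ℝ) := by
        intro i
        have h1 := hcnt i
        have h2 : ((Ps i).card:ℝ) * T i ≤ 2*X*(Q.card:ℝ) := by
          have h3 := mul_le_mul_of_nonneg_left h1
            (le_of_lt (by positivity : (0:ℝ) < 2*X))
          calc ((Ps i).card:ℝ) * T i
              = 2*X*(((Ps i).card:ℝ)*(0.5*(T i/X))) := by field_simp; ring
            _ ≤ 2*X*(Q.card:ℝ) := h3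
        have hg2 : (0:ℝ) ≤ 2*γ := by linarith only [hγ0]
        calc ((Ps i).card:ℝ)*(2*γ*T i) = 2*γ*(((Ps i).card:ℝ)*T i) := by ring
          _ ≤ 2*γ*(2*X*(Q.card:ℝ)) := mul_le_mul_of_nonneg_left h2 hg2
          _ = 4*γ*X*(Q.card:ℝ) := by ring
      have q3 : (0:ℝ) ≤ 4*γ*X*((k:ℝ)*t) := by
        apply mul_nonneg (mul_nonneg (mul_nonneg (by norm_num) hγ0.le) hX0.le)
        exact mul_nonneg (by positivity) ht0
      have q1 : 4*γ*X*(Q.card:ℝ) ≤ 4*γ*X*((k:ℝ)*t) :=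
        mul_le_mul_of_nonneg_left hQk
          (mul_nonneg (mul_nonneg (by norm_num) hγ0.le) hX0.le)
      calc (QN.card:ℝ) = ∑ i : Fin (L+1), ∑ P ∈ Ps i, (P.card:ℝ) := hsplit1
        _ ≤ ∑ i : Fin (L+1), ((Ps i).card:ℝ)*(2*γ*T i) :=
            Finset.sum_le_sum (fun i _ => by
              calc ∑ P ∈ Ps i, (P.card:ℝ) ≤ ∑ _P ∈ Ps i, 2*γ*T i :=
                    Finset.sum_le_sum (fun P hP => hsmall' i P hP)
                _ = ((Ps i).card:ℝ)*(2*γ*T i) := by rw [Finset.sum_const, nsmul_eq_mul])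
        _ ≤ ∑ _i : Fin (L+1), 4*γ*X*((k:ℝ)*t) :=
            Finset.sum_le_sum (fun i _ => le_trans (hper i) q1)
        _ = ((L:ℝ)+1) * (4*γ*X*((k:ℝ)*t)) := by
            rw [Finset.sum_const, Finset.card_univ, Fintype.card_fin, nsmul_eq_mul]
            push_cast; ring
        _ ≤ (2*(L:ℝ)) * (4*γ*X*((k:ℝ)*t)) :=
            mul_le_mul_of_nonneg_right (by linarith only [hL1]) q3
        _ = (8*X*(k:ℝ)*(L:ℝ)*γ)*t := by ring
        _ ≤ η*t := mul_le_mul_of_nonneg_right hγ1 ht0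
    have hcap : ∀ z0 : {z // z ∈ Z},
        (∑ p ∈ Q.attach, if π' p = z0 then (1:ℝ) else 0) ≤ (1+η)*t := by
      intro z0
      have e0 : (∑ p ∈ Q.attach, if π' p = z0 then (1:ℝ) else 0)
          = ∑ p ∈ Q, (if h : p ∈ Q then (if π' ⟨p,h⟩ = z0 then (1:ℝ) else 0) else 0) :=
        sum_attach_dite Q (fun p hp => if π' ⟨p,hp⟩ = z0 then (1:ℝ) else 0)
      have esplit : ∑ p ∈ Q, (if h : p ∈ Q then (if π' ⟨p,h⟩ = z0 then (1:ℝ) else 0) else 0)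
          = (∑ p ∈ Q \ QN, (if h : p ∈ Q then (if π' ⟨p,h⟩ = z0 then (1:ℝ) else 0) else 0))
          + ∑ p ∈ QN, (if h : p ∈ Q then (if π' ⟨p,h⟩ = z0 then (1:ℝ) else 0) else 0) :=
        (Finset.sum_sdiff hQNQ).symm
      have hb1 : (∑ p ∈ Q \ QN, (if h : p ∈ Q then
          (if π' ⟨p,h⟩ = z0 then (1:ℝ) else 0) else 0)) ≤ t := by
        have hπt := hπ z0
        simp only at hπt
        have e1 : (∑ p ∈ (Q \ QN).attach, if π p = z0 then (1:ℝ) else 0)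
            = ∑ p ∈ Q \ QN, (if h : p ∈ Q \ QN then
              (if π ⟨p,h⟩ = z0 then (1:ℝ) else 0) else 0) :=
          sum_attach_dite (Q \ QN) (fun p hp => if π ⟨p,hp⟩ = z0 then (1:ℝ) else 0)
        have e2 : ∀ p ∈ Q \ QN, (if h : p ∈ Q then
            (if π' ⟨p,h⟩ = z0 then (1:ℝ) else 0) else 0)
            = (if h : p ∈ Q \ QN then (if π ⟨p,h⟩ = z0 then (1:ℝ) else 0) else 0) := by
          intro p hp
          have h1 : p ∈ Q := (Finset.mem_sdiff.1 hp).1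
          have h2 : p ∉ QN := (Finset.mem_sdiff.1 hp).2
          rw [dif_pos h1, dif_pos hp]
          simp only [hπ'def]
          rw [dif_neg h2]
        calc (∑ p ∈ Q \ QN, (if h : p ∈ Q then
            (if π' ⟨p,h⟩ = z0 then (1:ℝ) else 0) else 0))
            = ∑ p ∈ Q \ QN, (if h : p ∈ Q \ QN then
              (if π ⟨p,h⟩ = z0 then (1:ℝ) else 0) else 0) := Finset.sum_congr rfl e2
          _ ≤ t := by rw [← e1]; exact hπt
      have hb2 : (∑ p ∈ QN, (if h : p ∈ Q then
          (if π' ⟨p,h⟩ = z0 then (1:ℝ) else 0) else 0)) ≤ (QN.card:ℝ) := by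
        calc (∑ p ∈ QN, (if h : p ∈ Q then (if π' ⟨p,h⟩ = z0 then (1:ℝ) else 0) else 0))
            ≤ ∑ _p ∈ QN, (1:ℝ) := by
              apply Finset.sum_le_sum
              intro p _
              split_ifs <;> norm_num
          _ = (QN.card:ℝ) := by simp
      rw [e0, esplit]
      have : (1+η)*t = t + η*t := by ring
      rw [this]
      exact add_le_add hb1 (le_trans hb2 hQNcard)
    refine le_trans (iInf_le _ ⟨π', hcap⟩) ?_
    rw [hCπ]
    calc ENNReal.ofReal (∑ p ∈ Q.attach, (fun _ => (1:ℝ)) p.1 * dist p.1 (π' p).1 ^ r)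
        = ENNReal.ofReal (C + E) := by rw [hcost]
      _ ≤ ENNReal.ofReal ((1+ε)*C) := ENNReal.ofReal_le_ofReal (by linarith only [hEe])
      _ = ENNReal.ofReal (1+ε) * ENNReal.ofReal C :=
          ENNReal.ofReal_mul (by linarith)
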